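/- With the twisted-like generators 𝕃 = -ε_{ABC}V^C Z_⊥^A ∂_⊥^B and ℙ^A = Z_⊥^A - (N_⊥ + Δ(N_∥))∂_⊥^A, the operators 𝕃 and ℙ^A commute with N_∥, 𝕃 commutes with □_⊥ - 1, and [ℙ^A, □_⊥ - 1] = 2 ∂_⊥^A (□_⊥ - 1). Consequently the kernel of □_⊥ - 1 intersected with an eigenspace of N_∥ is invariant under 𝕃 and all ℙ^A. -/

import Mathlib

noncomputable section

open MvPolynomial

-- Polynomials in the commuting variables `Z^0, Z^1, Z^2`.
abbrev P3 := MvPolynomial (Fin 3) ℝ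

/-- The metric `η = diag(-1, 1, 1)` (equal to its own inverse). -/
def eta : Fin 3 → ℝ := ![-1, 1, 1]

/-- The Levi-Civita symbol `ε_{ABC}` with `ε_{012} = 1`. -/
def eps (A B C : Fin 3) : ℝ :=
  (((A : ℕ) : ℝ) - ((B : ℕ) : ℝ)) * (((B : ℕ) : ℝ) - ((C : ℕ) : ℝ)) *
    (((C : ℕ) : ℝ) - ((A : ℕ) : ℝ)) / 2

/-- The partial derivative `∂/∂Z^A`. -/
def Dop (A : Fin 3) : P3 →ₗ[ℝ] P3 := (pderiv A).toLinearMap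

/-- The polynomial `Z·V = η_{AB} Z^A V^B`. -/
def ZdotV (V : Fin 3 → ℝ) : P3 := ∑ A : Fin 3, C (eta A * V A) * X A

/-- The transverse variable `Z_⊥^A = Z^A - (Z·V) V^A`. -/
def Zperp (V : Fin 3 → ℝ) (A : Fin 3) : P3 := X A - C (V A) * ZdotV V

/-- The parallel variable `Z_∥^A = (Z·V) V^A`. -/
def Zpar (V : Fin 3 → ℝ) (A : Fin 3) : P3 := C (V A) * ZdotV V

/-- The operator `V·∂ = V^A ∂/∂Z^A`. -/
def VdotD (V : Fin 3 → ℝ) : P3 →ₗ[ℝ] P3 := ∑ A : Fin 3, V A • Dop A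

/-- The transverse derivative `∂_⊥^A = ∂/∂Z_A - V^A (V·∂)` (with `∂/∂Z_A = η^{AB} ∂_B`). -/
def Dperp (V : Fin 3 → ℝ) (A : Fin 3) : P3 →ₗ[ℝ] P3 := eta A • Dop A - V A • VdotD V

/-- The parallel derivative `∂_∥^A = V^A (V·∂)`. -/
def Dpar (V : Fin 3 → ℝ) (A : Fin 3) : P3 →ₗ[ℝ] P3 := V A • VdotD V

/-- The transverse counting operator `N_⊥ = Z_⊥·∂_⊥ = η_{AB} Z_⊥^A ∂_⊥^B`. -/
def Nperp (V : Fin 3 → ℝ) : P3 →ₗ[ℝ] P3 :=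
  ∑ A : Fin 3, eta A • (LinearMap.mulLeft ℝ (Zperp V A) ∘ₗ Dperp V A)

/-- The parallel counting operator `N_∥ = Z_∥·∂_∥`. -/
def Npar (V : Fin 3 → ℝ) : P3 →ₗ[ℝ] P3 :=
  ∑ A : Fin 3, eta A • (LinearMap.mulLeft ℝ (Zpar V A) ∘ₗ Dpar V A)

/-- The twisted-like Lorentz generator `𝕃 = -ε_{ABC} V^C Z_⊥^A ∂_⊥^B`. -/
def Lgen (V : Fin 3 → ℝ) : P3 →ₗ[ℝ] P3 :=
  -∑ A : Fin 3, ∑ B : Fin 3, ∑ C : Fin 3,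
    (eps A B C * V C) • (LinearMap.mulLeft ℝ (Zperp V A) ∘ₗ Dperp V B)

/-- The twisted-like transvection `ℙ^A = Z_⊥^A - (N_⊥ + Δ(N_∥)) ∂_⊥^A`, where `Δ` is an
arbitrary polynomial evaluated at the operator `N_∥`. -/
def Pgen (V : Fin 3 → ℝ) (Δ : Polynomial ℝ) (A : Fin 3) : P3 →ₗ[ℝ] P3 :=
  LinearMap.mulLeft ℝ (Zperp V A) -
    ((Nperp V + Polynomial.aeval (Npar V : Module.End ℝ P3) Δ) ∘ₗ Dperp V A)


/-- The transverse trace operator `□_⊥ = ∂_⊥·∂_⊥ = η_{AB} ∂_⊥^A ∂_⊥^B`. -/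
def Boxperp (V : Fin 3 → ℝ) : P3 →ₗ[ℝ] P3 :=
  ∑ A : Fin 3, eta A • (Dperp V A ∘ₗ Dperp V A)

section Aux
variable (V : Fin 3 → ℝ)

lemma Dop_apply (A : Fin 3) (F : P3) : Dop A F = pderiv A F := rfl

lemma pd_swap (A B : Fin 3) (F : P3) : pderiv A (pderiv B F) = pderiv B (pderiv A F) := by
  induction F using MvPolynomial.induction_on with
  | C r => simp
  | add p q hp hq => simp only [map_add, hp, hq]
  | mul_X p i hp => simp [pderiv_mul, hp, pderiv_X, Pi.single_apply]
                    split_ifs <;> (try simp only [map_zero]) <;> ring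

lemma pd10 (F : P3) : pderiv 1 (pderiv 0 F) = pderiv 0 (pderiv 1 F) := pd_swap 1 0 F
lemma pd20 (F : P3) : pderiv 2 (pderiv 0 F) = pderiv 0 (pderiv 2 F) := pd_swap 2 0 F
lemma pd21 (F : P3) : pderiv 2 (pderiv 1 F) = pderiv 1 (pderiv 2 F) := pd_swap 2 1 F

lemma VdotD_apply (F : P3) :
    VdotD V F = V 0 • pderiv 0 F + V 1 • pderiv 1 F + V 2 • pderiv 2 F := by
  simp [VdotD, Fin.sum_univ_three, Dop_apply]

lemma Dperp_apply (A : Fin 3) (F : P3) :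
    Dperp V A F = eta A • pderiv A F - V A • VdotD V F := by
  simp [Dperp, Dop_apply]

lemma VdotD_leibniz (p F : P3) : VdotD V (p * F) = VdotD V p * F + p * VdotD V F := by
  simp only [VdotD_apply, pderiv_mul, smul_add]
  ring_nf
  simp [smul_eq_C_mul]
  ring

lemma Dperp_leibniz (A : Fin 3) (p F : P3) :
    Dperp V A (p * F) = Dperp V A p * F + p * Dperp V A F := by
  simp only [Dperp_apply, pderiv_mul, VdotD_leibniz, smul_add, smul_sub, smul_eq_C_mul]
  ring

lemma pd_ZdotV (A : Fin 3) : pderiv A (ZdotV V) = C (eta A * V A) := by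
  fin_cases A <;> simp [ZdotV, Fin.sum_univ_three]

end Aux
def piT (V : Fin 3 → ℝ) (A B : Fin 3) : ℝ := (if A = B then eta A else 0) - V A * V B

section Vals
variable (V : Fin 3 → ℝ)

lemma C_eq (r : ℝ) : (C r : P3) = r • 1 := by rw [← mul_one (C r), C_mul']

lemma hVr (hV : ∑ A : Fin 3, eta A * V A * V A = 1) :
    -(V 0 * V 0) + V 1 * V 1 + V 2 * V 2 = 1 := by
  have := hV; simp [Fin.sum_univ_three, eta] at this; linarith

lemma VdotD_ZdotV (hV : ∑ A : Fin 3, eta A * V A * V A = 1) : VdotD V (ZdotV V) = 1 := by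
  have h := hVr V hV
  simp only [VdotD_apply, pd_ZdotV, C_eq, smul_smul]
  rw [← add_smul, ← add_smul]
  rw [show V 0 * (eta 0 * V 0) + V 1 * (eta 1 * V 1) + V 2 * (eta 2 * V 2) = 1 by
    norm_num [eta, Matrix.cons_val_two]; linarith, one_smul]

lemma Dperp_ZdotV (hV : ∑ A : Fin 3, eta A * V A * V A = 1) (A : Fin 3) :
    Dperp V A (ZdotV V) = 0 := by
  rw [Dperp_apply, pd_ZdotV, VdotD_ZdotV V hV, C_eq, smul_smul]
  rw [show eta A * (eta A * V A) = V A by fin_cases A <;> norm_num [eta], sub_self]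

lemma Dperp_C (A : Fin 3) (r : ℝ) : Dperp V A (C r) = 0 := by
  simp [Dperp_apply, VdotD_apply]

lemma VdotD_Zperp (hV : ∑ A : Fin 3, eta A * V A * V A = 1) (B : Fin 3) :
    VdotD V (Zperp V B) = 0 := by
  simp only [Zperp, map_sub, VdotD_leibniz, VdotD_ZdotV V hV, mul_one]
  rw [show VdotD V (C (V B)) = 0 by simp [VdotD_apply], zero_mul, zero_add]
  rw [VdotD_apply]
  fin_cases B <;> simp [pderiv_X, Pi.single_apply, smul_eq_C_mul]

lemma pd_Zperp (A B : Fin 3) :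
    pderiv A (Zperp V B) = C ((if A = B then 1 else 0) - V B * (eta A * V A)) := by
  simp only [Zperp, map_sub, pderiv_mul, pd_ZdotV, pderiv_C, zero_mul, zero_add,
    pderiv_X, Pi.single_apply]
  rw [← C_mul]
  congr 1
  split_ifs with h1 h2 h2 <;> simp_all [eq_comm]

lemma Dperp_Zperp (hV : ∑ A : Fin 3, eta A * V A * V A = 1) (A B : Fin 3) :
    Dperp V A (Zperp V B) = piT V A B • 1 := by
  rw [Dperp_apply, VdotD_Zperp V hV, smul_zero, sub_zero, pd_Zperp, C_eq, smul_smul]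
  congr 1
  fin_cases A <;> fin_cases B <;> norm_num [eta, piT, Fin.ext_iff] <;> ring

end Vals
section Comm
variable (V : Fin 3 → ℝ)

example : eps 0 1 2 = 1 := by norm_num [eps]
example : eps 0 0 2 = 0 := by norm_num [eps]

lemma pd_Dperp (A B : Fin 3) (F : P3) :
    pderiv A (Dperp V B F) = Dperp V B (pderiv A F) := by
  simp only [Dperp_apply, VdotD_apply, map_sub, map_add, Derivation.map_smul]
  rw [pd_swap A B, pd_swap A 0, pd_swap A 1, pd_swap A 2]

lemma VdotD_Dperp (B : Fin 3) (F : P3) :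
    VdotD V (Dperp V B F) = Dperp V B (VdotD V F) := by
  rw [VdotD_apply, VdotD_apply V F, pd_Dperp, pd_Dperp, pd_Dperp, map_add, map_add,
    (Dperp V B).map_smul, (Dperp V B).map_smul, (Dperp V B).map_smul]

lemma DDswap (A B : Fin 3) (F : P3) :
    Dperp V A (Dperp V B F) = Dperp V B (Dperp V A F) := by
  rw [Dperp_apply, pd_Dperp, VdotD_Dperp, ← (Dperp V B).map_smul, ← (Dperp V B).map_smul,
    ← map_sub, ← Dperp_apply]
end Comm
section More
variable (V : Fin 3 → ℝ)

lemma finmk0 : (⟨0, by omega⟩ : Fin 3) = 0 := rfl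
lemma finmk1 : (⟨1, by omega⟩ : Fin 3) = 1 := rfl
lemma finmk2 : (⟨2, by omega⟩ : Fin 3) = 2 := rfl

lemma Boxperp_apply (F : P3) :
    Boxperp V F = eta 0 • Dperp V 0 (Dperp V 0 F) + eta 1 • Dperp V 1 (Dperp V 1 F)
      + eta 2 • Dperp V 2 (Dperp V 2 F) := by
  simp [Boxperp, Fin.sum_univ_three]

lemma BoxD (B : Fin 3) (F : P3) :
    Boxperp V (Dperp V B F) = Dperp V B (Boxperp V F) := by
  rw [Boxperp_apply, Boxperp_apply]
  rw [DDswap V 0 B F, DDswap V 0 B, DDswap V 1 B F, DDswap V 1 B, DDswap V 2 B F,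
    DDswap V 2 B, map_add, map_add, (Dperp V B).map_smul, (Dperp V B).map_smul,
    (Dperp V B).map_smul]

lemma S0 (hV : ∑ A : Fin 3, eta A * V A * V A = 1) (F : P3) :
    (-(V 0)) • Dperp V 0 F + (V 1) • Dperp V 1 F + (V 2) • Dperp V 2 F = 0 := by
  have h := hVr V hV
  simp only [Dperp_apply, VdotD_apply, eta]
  norm_num [Matrix.cons_val_two]
  match_scalars <;>
    first
      | linear_combination V 0 * h | linear_combination (-(V 0)) * h
      | linear_combination V 1 * h | linear_combination (-(V 1)) * h
      | linear_combination V 2 * h | linear_combination (-(V 2)) * h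

lemma S2 (hV : ∑ A : Fin 3, eta A * V A * V A = 1) (A : Fin 3) (F : P3) :
    (eta 0 * piT V 0 A) • Dperp V 0 F + (eta 1 * piT V 1 A) • Dperp V 1 F
      + (eta 2 * piT V 2 A) • Dperp V 2 F = Dperp V A F := by
  have h0 := S0 V hV F
  fin_cases A <;>
    simp only [piT, Fin.mk_one, Fin.zero_eta, Fin.reduceFinMk, Fin.isValue] <;>
    norm_num [eta, Fin.ext_iff, Matrix.cons_val_two] <;>
    first
      | linear_combination (norm := module) (-(V 0)) • h0
      | linear_combination (norm := module) (-(V 1)) • h0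
      | linear_combination (norm := module) (-(V 2)) • h0

end More
section More2
variable (V : Fin 3 → ℝ)

lemma Dperp_smul_one_mul (A : Fin 3) (r : ℝ) (F : P3) :
    Dperp V A ((r • (1:P3)) * F) = r • Dperp V A F := by
  rw [smul_mul_assoc, one_mul, (Dperp V A).map_smul]

lemma Box_mul (hV : ∑ A : Fin 3, eta A * V A * V A = 1) (A : Fin 3) (F : P3) :
    Boxperp V (Zperp V A * F) = Zperp V A * Boxperp V F + (2:ℝ) • Dperp V A F := by
  have key : ∀ C' : Fin 3, Dperp V C' (Dperp V C' (Zperp V A * F))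
      = Zperp V A * Dperp V C' (Dperp V C' F) + (2 * piT V C' A) • Dperp V C' F := by
    intro C'
    rw [Dperp_leibniz, Dperp_Zperp V hV, map_add, Dperp_smul_one_mul, Dperp_leibniz,
      Dperp_Zperp V hV, smul_mul_assoc, one_mul]
    module
  rw [Boxperp_apply, Boxperp_apply, key 0, key 1, key 2]
  simp only [mul_add, mul_smul_comm]
  have h2 := S2 V hV A F
  linear_combination (norm := module) (2:ℝ) • h2

lemma Npar_eq (hV : ∑ A : Fin 3, eta A * V A * V A = 1) :
    Npar V = LinearMap.mulLeft ℝ (ZdotV V) * VdotD V := by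
  have h := hVr V hV
  refine LinearMap.ext fun F => ?_
  show _ = ZdotV V * VdotD V F
  simp only [Npar, Zpar, Dpar, Fin.sum_univ_three, LinearMap.add_apply, LinearMap.smul_apply,
    LinearMap.comp_apply, LinearMap.mulLeft_apply, Module.End.mul_apply, C_mul', smul_smul]
  simp only [smul_mul_assoc, mul_smul_comm, smul_smul]
  match_scalars
  norm_num [eta, Matrix.cons_val_two]
  linarith

end More2
section More3
variable (V : Fin 3 → ℝ) (Δ : Polynomial ℝ)

lemma cMM (p q : P3) : Commute (LinearMap.mulLeft ℝ p) (LinearMap.mulLeft ℝ q) := by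
  refine LinearMap.ext fun F => ?_
  show p * (q * F) = q * (p * F)
  ring

lemma cDE (A : Fin 3) : Commute (Dperp V A) (VdotD V) :=
  LinearMap.ext fun F => (VdotD_Dperp V A F).symm

lemma cDD (A B : Fin 3) : Commute (Dperp V A) (Dperp V B) :=
  LinearMap.ext fun F => DDswap V A B F

lemma cEMperp (hV : ∑ A : Fin 3, eta A * V A * V A = 1) (B : Fin 3) :
    Commute (VdotD V) (LinearMap.mulLeft ℝ (Zperp V B)) := by
  refine LinearMap.ext fun F => ?_
  show VdotD V (Zperp V B * F) = Zperp V B * VdotD V F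
  rw [VdotD_leibniz, VdotD_Zperp V hV, zero_mul, zero_add]

lemma cDMz (hV : ∑ A : Fin 3, eta A * V A * V A = 1) (A : Fin 3) :
    Commute (Dperp V A) (LinearMap.mulLeft ℝ (ZdotV V)) := by
  refine LinearMap.ext fun F => ?_
  show Dperp V A (ZdotV V * F) = ZdotV V * Dperp V A F
  rw [Dperp_leibniz, Dperp_ZdotV V hV, zero_mul, zero_add]

lemma cNparD (hV : ∑ A : Fin 3, eta A * V A * V A = 1) (A : Fin 3) :
    Commute (Npar V) (Dperp V A) := by
  rw [Npar_eq V hV]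
  exact Commute.mul_left (cDMz V hV A).symm (cDE V A).symm

lemma cNparM (hV : ∑ A : Fin 3, eta A * V A * V A = 1) (B : Fin 3) :
    Commute (Npar V) (LinearMap.mulLeft ℝ (Zperp V B)) := by
  rw [Npar_eq V hV]
  exact Commute.mul_left (cMM _ _) (cEMperp V hV B)

lemma cNparNperp (hV : ∑ A : Fin 3, eta A * V A * V A = 1) :
    Commute (Npar V) (Nperp V) := by
  unfold Nperp
  refine Commute.sum_right _ _ _ fun A _ => ?_
  exact ((cNparM V hV A).mul_right (cNparD V hV A)).smul_right _

lemma cNparBox (hV : ∑ A : Fin 3, eta A * V A * V A = 1) :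
    Commute (Npar V) (Boxperp V) := by
  unfold Boxperp
  refine Commute.sum_right _ _ _ fun A _ => ?_
  exact ((cNparD V hV A).mul_right (cNparD V hV A)).smul_right _

lemma cNparL (hV : ∑ A : Fin 3, eta A * V A * V A = 1) :
    Commute (Npar V) (Lgen V) := by
  unfold Lgen
  exact Commute.neg_right <| Commute.sum_right _ _ _ fun A _ =>
    Commute.sum_right _ _ _ fun B _ => Commute.sum_right _ _ _ fun Cc _ =>
      ((cNparM V hV A).mul_right (cNparD V hV B)).smul_right _

lemma commute_aeval {a b : Module.End ℝ P3} (h : Commute a b) (q : Polynomial ℝ) :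
    Commute a (Polynomial.aeval b q) := by
  induction q using Polynomial.induction_on' with
  | add p q hp hq => rw [map_add]; exact hp.add_right hq
  | monomial n r =>
    rw [Polynomial.aeval_monomial]
    exact Commute.mul_right (Commute.symm (Algebra.commutes r a)) (h.pow_right n)

lemma cNparQ : Commute (Npar V) (Polynomial.aeval (Npar V : Module.End ℝ P3) Δ) :=
  commute_aeval (Commute.refl _) Δ

lemma cNparP (hV : ∑ A : Fin 3, eta A * V A * V A = 1) (A : Fin 3) :
    Commute (Npar V) (Pgen V Δ A) := by
  unfold Pgen
  exact Commute.sub_right (cNparM V hV A)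
    (((cNparNperp V hV).add_right (cNparQ V Δ)).mul_right (cNparD V hV A))

lemma cDBox (A : Fin 3) : Commute (Dperp V A) (Boxperp V) := by
  unfold Boxperp
  refine Commute.sum_right _ _ _ fun B _ => ?_
  exact ((cDD V A B).mul_right (cDD V A B)).smul_right _

lemma cQBox (hV : ∑ A : Fin 3, eta A * V A * V A = 1) :
    Commute (Polynomial.aeval (Npar V : Module.End ℝ P3) Δ) (Boxperp V) :=
  (commute_aeval (cNparBox V hV).symm Δ).symm

end More3
section More4
variable (V : Fin 3 → ℝ) (Δ : Polynomial ℝ)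

lemma L1op (hV : ∑ A : Fin 3, eta A * V A * V A = 1) (A : Fin 3) :
    LinearMap.mulLeft ℝ (Zperp V A) * Boxperp V
      = Boxperp V * LinearMap.mulLeft ℝ (Zperp V A) - (2:ℝ) • Dperp V A := by
  refine LinearMap.ext fun F => ?_
  show Zperp V A * Boxperp V F
    = (Boxperp V * LinearMap.mulLeft ℝ (Zperp V A) - (2:ℝ) • Dperp V A) F
  rw [LinearMap.sub_apply, LinearMap.smul_apply, Module.End.mul_apply,
    LinearMap.mulLeft_apply, Box_mul V hV A F]
  abel

lemma Nperp_apply (F : P3) :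
    Nperp V F = eta 0 • (Zperp V 0 * Dperp V 0 F) + eta 1 • (Zperp V 1 * Dperp V 1 F)
      + eta 2 • (Zperp V 2 * Dperp V 2 F) := by
  simp [Nperp, Fin.sum_univ_three]

lemma L2op (hV : ∑ A : Fin 3, eta A * V A * V A = 1) :
    Nperp V * Boxperp V = Boxperp V * Nperp V - (2:ℝ) • Boxperp V := by
  refine LinearMap.ext fun F => ?_
  show Nperp V (Boxperp V F)
    = (Boxperp V * Nperp V - (2:ℝ) • Boxperp V) F
  rw [LinearMap.sub_apply, LinearMap.smul_apply, Module.End.mul_apply]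
  rw [Nperp_apply, Nperp_apply]
  rw [map_add, map_add, (Boxperp V).map_smul, (Boxperp V).map_smul, (Boxperp V).map_smul,
    Box_mul V hV 0, Box_mul V hV 1, Box_mul V hV 2, BoxD, BoxD, BoxD]
  rw [Boxperp_apply V F]
  module

lemma Lgen_apply (F : P3) :
    Lgen V F = (V 2) • (Zperp V 1 * Dperp V 0 F) - (V 2) • (Zperp V 0 * Dperp V 1 F)
      + (V 1) • (Zperp V 0 * Dperp V 2 F) - (V 1) • (Zperp V 2 * Dperp V 0 F)
      + (V 0) • (Zperp V 2 * Dperp V 1 F) - (V 0) • (Zperp V 1 * Dperp V 2 F) := by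
  have e1 : eps 0 1 2 = 1 := by norm_num [eps]
  have e2 : eps 0 2 1 = -1 := by norm_num [eps]
  have e3 : eps 1 0 2 = -1 := by norm_num [eps]
  have e4 : eps 1 2 0 = 1 := by norm_num [eps]
  have e5 : eps 2 0 1 = 1 := by norm_num [eps]
  have e6 : eps 2 1 0 = -1 := by norm_num [eps]
  have ez : ∀ A B C : Fin 3, (A = B ∨ B = C ∨ A = C) → eps A B C = 0 := by
    intro A B C h
    rcases h with h | h | h <;> subst h <;> norm_num [eps]
  simp only [Lgen, Fin.sum_univ_three, LinearMap.neg_apply, LinearMap.add_apply,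
    LinearMap.smul_apply, LinearMap.comp_apply, LinearMap.mulLeft_apply,
    e1, e2, e3, e4, e5, e6,
    ez 0 0 0 (by tauto), ez 0 0 1 (by tauto), ez 0 0 2 (by tauto),
    ez 0 1 0 (by tauto), ez 0 1 1 (by tauto),
    ez 0 2 0 (by tauto), ez 0 2 2 (by tauto),
    ez 1 0 0 (by tauto), ez 1 0 1 (by tauto),
    ez 1 1 0 (by tauto), ez 1 1 1 (by tauto), ez 1 1 2 (by tauto),
    ez 1 2 1 (by tauto), ez 1 2 2 (by tauto),
    ez 2 0 0 (by tauto), ez 2 0 2 (by tauto),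
    ez 2 1 1 (by tauto), ez 2 1 2 (by tauto),
    ez 2 2 0 (by tauto), ez 2 2 1 (by tauto), ez 2 2 2 (by tauto),
    zero_mul, zero_smul, one_mul, neg_mul, neg_smul, LinearMap.zero_apply]
  module

lemma cLBox (hV : ∑ A : Fin 3, eta A * V A * V A = 1) :
    Commute (Lgen V) (Boxperp V) := by
  refine LinearMap.ext fun F => ?_
  show Lgen V (Boxperp V F) = Boxperp V (Lgen V F)
  rw [Lgen_apply, Lgen_apply V F]
  simp only [map_add, map_sub, (Boxperp V).map_smul, Box_mul V hV, BoxD]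
  rw [DDswap V 1 0 F, DDswap V 2 0 F, DDswap V 2 1 F]
  module

lemma key_alg (M N Q D B : Module.End ℝ P3)
    (h1 : M * B = B * M - (2:ℝ) • D) (h2 : N * B = B * N - (2:ℝ) • B)
    (h3 : Q * B = B * Q) (h4 : D * B = B * D) :
    (M - (N + Q) * D) * (B - 1) - (B - 1) * (M - (N + Q) * D)
      = (2:ℝ) • (D * (B - 1)) := by
  simp only [mul_sub, sub_mul, mul_add, add_mul, mul_one, one_mul, smul_mul_assoc,
    mul_smul_comm, mul_assoc]
  simp only [h4]
  simp only [← mul_assoc]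
  simp only [h1, h2, h3]
  simp only [sub_mul, add_mul, smul_mul_assoc, mul_assoc]
  module

end More4
/-- The twisted-like generators `𝕃` and `ℙ^A` commute with `N_∥`; `𝕃` commutes with
`□_⊥ - 1`, and `[ℙ^A, □_⊥ - 1] = 2 ∂_⊥^A (□_⊥ - 1)`. Consequently the kernel of
`□_⊥ - 1` intersected with an eigenspace of `N_∥` is invariant under `𝕃` and all `ℙ^A`. -/
theorem twisted_like_invariance (V : Fin 3 → ℝ)
    (hV : ∑ A : Fin 3, eta A * V A * V A = 1) (Δ : Polynomial ℝ) :
    (Lgen V ∘ₗ Npar V = Npar V ∘ₗ Lgen V) ∧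
    (∀ A : Fin 3, Pgen V Δ A ∘ₗ Npar V = Npar V ∘ₗ Pgen V Δ A) ∧
    (Lgen V ∘ₗ (Boxperp V - LinearMap.id) = (Boxperp V - LinearMap.id) ∘ₗ Lgen V) ∧
    (∀ A : Fin 3,
      Pgen V Δ A ∘ₗ (Boxperp V - LinearMap.id) - (Boxperp V - LinearMap.id) ∘ₗ Pgen V Δ A =
        (2 : ℝ) • (Dperp V A ∘ₗ (Boxperp V - LinearMap.id))) ∧
    (∀ (n : ℝ) (F : P3), Boxperp V F - F = 0 → Npar V F = n • F →
      (Boxperp V (Lgen V F) - Lgen V F = 0 ∧ Npar V (Lgen V F) = n • Lgen V F ∧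
        ∀ A : Fin 3, Boxperp V (Pgen V Δ A F) - Pgen V Δ A F = 0 ∧
          Npar V (Pgen V Δ A F) = n • Pgen V Δ A F)) := by
  have hL : Lgen V ∘ₗ Npar V = Npar V ∘ₗ Lgen V := (cNparL V hV).symm
  have hP : ∀ A : Fin 3, Pgen V Δ A ∘ₗ Npar V = Npar V ∘ₗ Pgen V Δ A :=
    fun A => (cNparP V Δ hV A).symm
  have hLB : Lgen V ∘ₗ (Boxperp V - LinearMap.id) = (Boxperp V - LinearMap.id) ∘ₗ Lgen V :=
    (cLBox V hV).sub_right (Commute.one_right (Lgen V))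
  have hPB : ∀ A : Fin 3,
      Pgen V Δ A ∘ₗ (Boxperp V - LinearMap.id) - (Boxperp V - LinearMap.id) ∘ₗ Pgen V Δ A =
        (2 : ℝ) • (Dperp V A ∘ₗ (Boxperp V - LinearMap.id)) := fun A =>
    key_alg (LinearMap.mulLeft ℝ (Zperp V A)) (Nperp V)
      (Polynomial.aeval (Npar V : Module.End ℝ P3) Δ) (Dperp V A) (Boxperp V)
      (L1op V hV A) (L2op V hV) ((cQBox V Δ hV).eq) ((cDBox V A).eq)
  refine ⟨hL, hP, hLB, hPB, ?_⟩
  intro n F h1 h2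
  refine ⟨?_, ?_, ?_⟩
  · have e := LinearMap.congr_fun hLB F
    simp only [LinearMap.comp_apply, LinearMap.sub_apply, LinearMap.id_apply] at e
    rw [h1, map_zero] at e
    exact e.symm
  · have e := LinearMap.congr_fun hL F
    simp only [LinearMap.comp_apply] at e
    rw [h2, map_smul] at e
    exact e.symm
  · intro A
    constructor
    · have e := LinearMap.congr_fun (hPB A) F
      simp only [LinearMap.comp_apply, LinearMap.sub_apply, LinearMap.smul_apply,
        LinearMap.id_apply] at e
      rw [h1, map_zero, map_zero, smul_zero, zero_sub, neg_eq_zero] at e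
      exact e
    · have e := LinearMap.congr_fun (hP A) F
      simp only [LinearMap.comp_apply] at e
      rw [h2, map_smul] at e
      exact e.symm
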